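/- Let A be a right coherent ring and X a contravariantly finite subcategory of mod-A containing all finitely generated projective A-modules. Then for every F in mod-X there exists an exact sequence 0 → F_0 → F → Hom_A(-, θ(F))|_X → F_1 → 0 in mod-X with F_0 and F_1 in mod_0-X, where θ(F) := coker(X_1 → X_0) for any projective presentation Hom(-,X_1)|_X → Hom(-,X_0)|_X → F → 0 of F. -/

import Mathlib

/- Common setup: right modules over a ring are realized as left modules over the opposite
ring; `mod-X` (finitely presented additive functors on a subcategory `X` of `mod-Λ`) is
realized inside the abelian category of contravariant `AddCommGrp`-valued functors on `X`. -/

open CategoryTheory CategoryTheory.Limits Opposite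

universe u

noncomputable section

namespace RelAus

attribute [local instance] CategoryTheory.Abelian.hasFiniteBiproducts

/-- `N` is a direct summand of `M`. -/
def IsDirectSummand {C : Type*} [Category C] (N M : C) : Prop :=
  ∃ (i : N ⟶ M) (r : M ⟶ N), i ≫ r = 𝟙 N

/-- `M ∈ add Xbar`: `M` is a direct summand of a finite direct sum of copies of `Xbar`. -/
def InAdd {R : Type u} [Ring R] (Xbar M : ModuleCat.{u} R) : Prop :=
  ∃ n : ℕ, IsDirectSummand M (ModuleCat.of R (Fin n → Xbar))

/-- `Xbar` is an additive generator of the class `𝒮` of modules: `𝒮 = add Xbar`. -/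
def IsAddGen {R : Type u} [Ring R] (𝒮 : Set (ModuleCat.{u} R)) (Xbar : ModuleCat.{u} R) : Prop :=
  Xbar ∈ 𝒮 ∧ ∀ M : ModuleCat.{u} R, M ∈ 𝒮 ↔ InAdd Xbar M

/-- An object of an additive category is indecomposable if it is nonzero and in any biproduct
decomposition one of the two factors is zero. -/
def IsIndecObj {C : Type*} [Category C] [Preadditive C] [HasBinaryBiproducts C] (N : C) : Prop :=
  ¬ IsZero N ∧ ∀ A B : C, Nonempty (N ≅ A ⊞ B) → IsZero A ∨ IsZero B

/-- The cardinality of the set of isomorphism classes of indecomposable direct summands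
of the module `T`. -/
def numIndecSummands {R : Type u} [Ring R] (T : ModuleCat.{u} R) : Cardinal :=
  Cardinal.mk {q : _root_.Quotient (isIsomorphicSetoid (ModuleCat.{u} R)) //
    ∃ N : ModuleCat.{u} R, Quotient.mk (isIsomorphicSetoid _) N = q ∧
      IsIndecObj N ∧ IsDirectSummand N T}

/-- The cardinality of the set of isomorphism classes of indecomposable (finitely generated)
projective `R`-modules. -/
def numIndecProj (R : Type u) [Ring R] : Cardinal :=
  Cardinal.mk {q : _root_.Quotient (isIsomorphicSetoid (ModuleCat.{u} R)) //
    ∃ N : ModuleCat.{u} R, Quotient.mk (isIsomorphicSetoid _) N = q ∧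
      IsIndecObj N ∧ Projective N ∧ Module.Finite R N}

/-- `T` has projective dimension at most one: there is a short exact sequence
`0 → P₁ → P₀ → T → 0` with `P₁`, `P₀` projective. -/
def ModPdLeOne {R : Type u} [Ring R] (T : ModuleCat.{u} R) : Prop :=
  ∃ (P₁ P₀ : ModuleCat.{u} R) (i : P₁ ⟶ P₀) (p : P₀ ⟶ T) (w : i ≫ p = 0),
    Projective P₁ ∧ Projective P₀ ∧ (ShortComplex.mk i p w).ShortExact

/-- `T` has injective dimension at most one: there is a short exact sequence
`0 → T → I₀ → I₁ → 0` with `I₀`, `I₁` injective. -/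
def ModIdLeOne {R : Type u} [Ring R] (T : ModuleCat.{u} R) : Prop :=
  ∃ (I₀ I₁ : ModuleCat.{u} R) (i : T ⟶ I₀) (p : I₀ ⟶ I₁) (w : i ≫ p = 0),
    Injective I₀ ∧ Injective I₁ ∧ (ShortComplex.mk i p w).ShortExact

/-- `T` is rigid, i.e. `Ext¹_R(T,T) = 0`: every self-extension of `T` splits. -/
def ModRigid {R : Type u} [Ring R] (T : ModuleCat.{u} R) : Prop :=
  ∀ (E : ModuleCat.{u} R) (i : T ⟶ E) (p : E ⟶ T) (w : i ≫ p = 0),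
    (ShortComplex.mk i p w).ShortExact → Nonempty (ShortComplex.mk i p w).Splitting

/-- `T` is a tilting `R`-module: `pd T ≤ 1`, `Ext¹_R(T,T) = 0`, and the number of isomorphism
classes of indecomposable direct summands of `T` equals the number of isomorphism classes of
indecomposable projective `R`-modules. -/
structure IsTiltingModule {R : Type u} [Ring R] (T : ModuleCat.{u} R) : Prop where
  pd_le_one : ModPdLeOne T
  rigid : ModRigid T
  summands : numIndecSummands T = numIndecProj R

/-- `T` is a cotilting `R`-module: `id T ≤ 1`, `Ext¹_R(T,T) = 0`, and the same counting
condition as for tilting modules. -/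
structure IsCotiltingModule {R : Type u} [Ring R] (T : ModuleCat.{u} R) : Prop where
  id_le_one : ModIdLeOne T
  rigid : ModRigid T
  summands : numIndecSummands T = numIndecProj R

/-- `M` is a (finitely generated) Gorenstein projective `R`-module: `M` is a syzygy of a
totally acyclic complex of finitely generated projective modules, i.e. of an acyclic complex
`P` of projectives such that `Hom_R(P, Q)` is acyclic for every projective `Q`. -/
def IsGProj {R : Type u} [Ring R] (M : ModuleCat.{u} R) : Prop :=
  ∃ P : CochainComplex (ModuleCat.{u} R) ℤ,
    (∀ n, Projective (P.X n)) ∧ (∀ n, Module.Finite R (P.X n)) ∧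
    (∀ n, P.ExactAt n) ∧
    (∀ Q : ModuleCat.{u} R, Projective Q →
      ∀ n, (((preadditiveYoneda.obj Q).mapHomologicalComplex _).obj P.op).ExactAt n) ∧
    ∃ n : ℤ, Nonempty (M ≅ kernel (P.d n (n + 1)))

/-- The class of finitely generated Gorenstein projective `R`-modules.  Applied to `R = Λᵐᵒᵖ`
this is `Gprj-Λ`, the Gorenstein projective right `Λ`-modules. -/
def GprjSet (R : Type u) [Ring R] : Set (ModuleCat.{u} R) :=
  {M | Module.Finite R M ∧ IsGProj M}

/-- The category of finitely generated `R`-modules. -/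
abbrev fgMod (R : Type u) [Ring R] := ObjectProperty.FullSubcategory (fun M : ModuleCat.{u} R => Module.Finite R M)

/-- `M` is basic: no indecomposable module occurs twice in a direct sum decomposition. -/
def IsBasic {R : Type u} [Ring R] (M : ModuleCat.{u} R) : Prop :=
  ∀ (N A : ModuleCat.{u} R), IsIndecObj N → ¬ Nonempty (M ≅ (N ⊞ N) ⊞ A)

/-- Two rings are Morita equivalent if their categories of finitely generated modules are
equivalent.  Applied to the opposite rings, this says that the categories of finitely
generated right modules are equivalent. -/
def MoritaEq (R S : Type u) [Ring R] [Ring S] : Prop :=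
  Nonempty (fgMod R ≌ fgMod S)

/-- A ring `A` is right coherent: every finitely generated right ideal of `A` (i.e. left ideal
of `Aᵐᵒᵖ`) is finitely presented as a right `A`-module. -/
def RightCoherent (A : Type u) [Ring A] : Prop :=
  ∀ I : Ideal Aᵐᵒᵖ, I.FG → Module.FinitePresentation Aᵐᵒᵖ I

/-- `Λ` is an (Iwanaga-)Gorenstein ring of G-dimension one: the injective dimension of `Λ`
as a right module over itself and as a left module over itself are both equal to `1`. -/
def GorensteinDimOne (Λ : Type u) [Ring Λ] : Prop :=
  (ModIdLeOne (ModuleCat.of Λᵐᵒᵖ Λ) ∧ ¬ Injective (ModuleCat.of Λᵐᵒᵖ Λ)) ∧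
  (ModIdLeOne (ModuleCat.of Λ Λ) ∧ ¬ Injective (ModuleCat.of Λ Λ))

variable {Λ : Type u} [Ring Λ]

/-- The category of right `Λ`-modules, realized as left modules over `Λᵐᵒᵖ`. -/
abbrev RMod (Λ : Type u) [Ring Λ] := ModuleCat.{u} Λᵐᵒᵖ

/-- Given the end `ε : Q ⟶ Xbar` of a projective presentation of `Xbar`, the evaluation
`T = ζ^X_{Xbar}(Xbar)` of the intermediate extension at `Xbar`: concretely, it is the set of
endomorphisms of `Xbar` that factor through `ε`, which is a right ideal of
`Γ = End_Λ(Xbar)`, i.e. a `Γᵐᵒᵖ`-submodule of `Γ` (right `Γ`-modules being realized as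
`Γᵐᵒᵖ`-modules). -/
def zetaEvalSub {Q Xbar : RMod Λ} (ε : Q ⟶ Xbar) :
    Submodule (End Xbar)ᵐᵒᵖ (End Xbar) where
  carrier := {g : End Xbar | ∃ h : Xbar ⟶ Q, h ≫ ε = g}
  add_mem' := by
    rintro a b ⟨h₁, rfl⟩ ⟨h₂, rfl⟩
    exact ⟨h₁ + h₂, by simp [Preadditive.add_comp]⟩
  zero_mem' := ⟨0, by simp⟩
  smul_mem' := by
    rintro e g ⟨h, rfl⟩
    exact ⟨e.unop ≫ h, by simp [Category.assoc]⟩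

/-- `Xm` lies in `⊥Λ`, i.e. `Ext^i_Λ(Xm, Λ) = 0` for all `i ≥ 1`, where `Λ` is regarded as a
right module over itself. -/
def MemPerp [HasExt.{u+1} (RMod Λ)] (Xm : RMod Λ) : Prop :=
  ∀ i : ℕ, 1 ≤ i → ∀ x : Abelian.Ext Xm (ModuleCat.of Λᵐᵒᵖ Λ) i, x = 0

/-- The standing hypotheses on a class `𝒳` of right `Λ`-modules: it consists of modules
belonging to `mod-Λ` (described by the predicate `memP`), it is additively closed and closed
under direct summands (hence a full additive subcategory of `mod-Λ` closed under summands),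
it contains all the projective modules of `mod-Λ`, and it is contravariantly finite in
`mod-Λ`, i.e. every module in `mod-Λ` has a right `𝒳`-approximation. -/
structure GoodSub (memP : RMod Λ → Prop) (𝒳 : Set (RMod Λ)) : Prop where
  mem_mod : ∀ M ∈ 𝒳, memP M
  sum_mem : ∀ M N : RMod Λ, M ∈ 𝒳 → N ∈ 𝒳 → ModuleCat.of Λᵐᵒᵖ (M × N) ∈ 𝒳
  summand_mem : ∀ M N : RMod Λ, M ∈ 𝒳 → IsDirectSummand N M → N ∈ 𝒳
  proj_mem : ∀ P : RMod Λ, memP P → Projective P → P ∈ 𝒳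
  approx : ∀ M : RMod Λ, memP M → ∃ X₀ ∈ 𝒳, ∃ f : X₀ ⟶ M,
    ∀ X' ∈ 𝒳, ∀ g : X' ⟶ M, ∃ h : X' ⟶ X₀, h ≫ f = g

/-- `𝒳` is closed under syzygies: for every short exact sequence `0 → Ω → P → X' → 0` with
`X' ∈ 𝒳` and `P` a finitely generated projective module, `Ω ∈ 𝒳`. -/
def ClosedUnderSyzygies (𝒳 : Set (RMod Λ)) : Prop :=
  ∀ (Ω P X' : RMod Λ), X' ∈ 𝒳 → Projective P → Module.Finite Λᵐᵒᵖ P →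
    ∀ (i : Ω ⟶ P) (p : P ⟶ X') (w : i ≫ p = 0),
      (ShortComplex.mk i p w).ShortExact → Ω ∈ 𝒳

/-- `𝒳` is closed under submodules. -/
def ClosedUnderSubmodules (𝒳 : Set (RMod Λ)) : Prop :=
  ∀ (N X' : RMod Λ), X' ∈ 𝒳 → ∀ i : N ⟶ X', Mono i → N ∈ 𝒳

section FunctorCategory

variable (𝒳 : Set (RMod Λ))

/-- The subcategory `X`, as a full subcategory of the category of right `Λ`-modules. -/
abbrev XCat := ObjectProperty.FullSubcategory (fun M : RMod Λ => M ∈ 𝒳)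

/-- The ambient abelian category of contravariant `AddCommGrp`-valued functors on `X`;
`mod-X` is its full subcategory of finitely presented functors (see `FinPres`). -/
abbrev FunCat := (XCat 𝒳)ᵒᵖ ⥤ AddCommGrpCat.{u}

/-- The restricted Yoneda functor `M ↦ Hom_Λ(-, M)|_X`.  On an arbitrary module `M` it
gives `θ_ρ(M)`; on objects of `X` it gives the representable functors, which are exactly the
projective objects of `mod-X`. -/
def resY : RMod Λ ⥤ FunCat 𝒳 :=
  preadditiveYoneda ⋙
    (Functor.whiskeringLeft (XCat 𝒳)ᵒᵖ (RMod Λ)ᵒᵖ AddCommGrpCat.{u}).obj (ObjectProperty.ι _).op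

/-- `F` is a finitely presented functor on `X`, i.e. an object of `mod-X`: there is an exact
sequence `Hom(-,X₁)|_X ⟶ Hom(-,X₀)|_X ⟶ F ⟶ 0` with `X₁, X₀ ∈ 𝒳`. -/
def FinPres (F : FunCat 𝒳) : Prop :=
  ∃ (X₁ X₀ : RMod Λ) (_ : X₁ ∈ 𝒳) (_ : X₀ ∈ 𝒳) (d : X₁ ⟶ X₀),
    Nonempty (F ≅ cokernel ((resY 𝒳).map d))

/-- `F` vanishes on all projective `Λ`-modules, i.e. `F` lies in `mod₀-X`. -/
def Vanish0 (F : FunCat 𝒳) : Prop :=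
  ∀ P : XCat 𝒳, Projective P.obj → IsZero (F.obj (op P))

lemma resY_comp_zero {P Q M : RMod Λ} (d : P ⟶ Q) (ε : Q ⟶ M) (w : d ≫ ε = 0) :
    (resY 𝒳).map d ≫ (resY 𝒳).map ε = 0 := by
  rw [← Functor.map_comp, w]
  simp only [resY, Functor.comp_map, Functor.map_zero]
  ext
  rfl

/-- Given a projective presentation `P ⟶ Q ⟶ M ⟶ 0` of `M`, the canonical natural map
`γ_M : θ_λ(M) ⟶ θ_ρ(M)` induced by the identity of `M`, where
`θ_λ(M) = coker(Hom(-,P)|_X → Hom(-,Q)|_X)` and `θ_ρ(M) = Hom(-,M)|_X`. -/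
def gammaMap {P Q M : RMod Λ} (d : P ⟶ Q) (ε : Q ⟶ M) (w : d ≫ ε = 0) :
    cokernel ((resY 𝒳).map d) ⟶ (resY 𝒳).obj M :=
  cokernel.desc _ ((resY 𝒳).map ε) (resY_comp_zero 𝒳 d ε w)

/-- The intermediate extension `ζ^X_M := Im (γ_M)`. -/
def zetaObj {P Q M : RMod Λ} (d : P ⟶ Q) (ε : Q ⟶ M) (w : d ≫ ε = 0) : FunCat 𝒳 :=
  image (gammaMap 𝒳 d ε w)

/-- The unit map `coker(Hom(-,X₁)|_X → Hom(-,X₀)|_X) ⟶ Hom(-, coker(X₁ → X₀))|_X`, i.e.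
the unit `F ⟶ θ_ρ θ (F)` of the adjunction `(θ, θ_ρ)` evaluated on a functor presented by
`d' : X₁ ⟶ X₀`. -/
def unitMap {X₁ X₀ : RMod Λ} (d' : X₁ ⟶ X₀) :
    cokernel ((resY 𝒳).map d') ⟶ (resY 𝒳).obj (cokernel d') :=
  cokernel.desc _ ((resY 𝒳).map (cokernel.π d'))
    (resY_comp_zero 𝒳 d' (cokernel.π d') (cokernel.condition d'))

/-- In `mod-X`, `F` has projective dimension at most one: there is a short exact sequence
`0 → Hom(-,X₁)|_X → Hom(-,X₀)|_X → F → 0` by representable functors (the projective objects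
of `mod-X`). -/
def PdLeOne (F : FunCat 𝒳) : Prop :=
  ∃ (X₁ X₀ : RMod Λ) (_ : X₁ ∈ 𝒳) (_ : X₀ ∈ 𝒳) (a : (resY 𝒳).obj X₁ ⟶ (resY 𝒳).obj X₀)
    (b : (resY 𝒳).obj X₀ ⟶ F) (w : a ≫ b = 0), (ShortComplex.mk a b w).ShortExact

/-- `F` lies in `Ker ℓ_λ`, where `ℓ_λ` is the left adjoint of the inclusion
`ℓ : mod₀-X → mod-X`; equivalently (by adjunction), `F` admits no nonzero morphism to any
object of `mod₀-X`. -/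
def MemKerEllLambda (F : FunCat 𝒳) : Prop :=
  ∀ G : FunCat 𝒳, FinPres 𝒳 G → Vanish0 𝒳 G → ∀ η : F ⟶ G, η = 0

/-- `F` lies in `Ker ℓ_ρ`, where `ℓ_ρ` is the right adjoint of the inclusion
`ℓ : mod₀-X → mod-X`; equivalently (by adjunction), `F` receives no nonzero morphism from
any object of `mod₀-X`. -/
def MemKerEllRho (F : FunCat 𝒳) : Prop :=
  ∀ G : FunCat 𝒳, FinPres 𝒳 G → Vanish0 𝒳 G → ∀ η : G ⟶ F, η = 0

/-- `F` is a projective object of `mod-X`: every epimorphism of `mod-X` onto `F`'s target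
lifts. -/
def ProjRelModX (F : FunCat 𝒳) : Prop :=
  ∀ (G H : FunCat 𝒳), FinPres 𝒳 G → FinPres 𝒳 H → ∀ e : G ⟶ H, Epi e →
    ∀ f : F ⟶ H, ∃ g : F ⟶ G, g ≫ e = f

end FunctorCategory




set_option synthInstance.maxHeartbeats 1000000
set_option maxHeartbeats 3200000

section Coherence

variable {R : Type u} [Ring R]

lemma fp_of_equiv {M N : Type u} [AddCommGroup M] [Module R M] [AddCommGroup N] [Module R N]
    (e : M ≃ₗ[R] N) (h : Module.FinitePresentation R M) : Module.FinitePresentation R N := by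
  haveI := h
  exact Module.finitePresentation_of_surjective e.toLinearMap e.surjective
    (by rw [LinearMap.ker_eq_bot.mpr e.injective]; exact Submodule.fg_bot)

lemma fg_submodule_pi_fp (hcoh : ∀ I : Ideal R, I.FG → Module.FinitePresentation R I) :
    ∀ (n : ℕ) (S : Submodule R (Fin n → R)), S.FG → Module.FinitePresentation R S := by
  intro n
  induction n with
  | zero =>
    intro S hS
    haveI : Subsingleton (Fin 0 → R) := ⟨fun a b => funext fun i => i.elim0⟩
    refine Module.finitePresentation_of_surjective
      (M := Fin 0 → R) (N := S) 0 (fun x => ⟨0, Subsingleton.elim _ _⟩) ?_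
    rw [LinearMap.ker_zero]
    exact Module.Finite.fg_top
  | succ n IH =>
    intro S hS
    haveI hSfin : Module.Finite R S := Module.Finite.iff_fg.mpr hS
    set p : S →ₗ[R] R := (LinearMap.proj (Fin.last n)) ∘ₗ S.subtype with hp
    have hI : (LinearMap.range p).FG := by
      rw [← Submodule.map_top]
      exact Submodule.FG.map p Module.Finite.fg_top
    haveI hIfp : Module.FinitePresentation R (LinearMap.range p) := hcoh _ hI
    have hsurj : Function.Surjective p.rangeRestrict := LinearMap.surjective_rangeRestrict p
    have hkfg : (LinearMap.ker p.rangeRestrict).FG :=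
      Module.FinitePresentation.fg_ker _ hsurj
    rw [LinearMap.ker_rangeRestrict] at hkfg
    haveI hkfin : Module.Finite R (LinearMap.ker p) := Module.Finite.iff_fg.mpr hkfg
    -- embed ker p into Fin n → R
    set j : S →ₗ[R] (Fin n → R) :=
      (LinearMap.pi fun i : Fin n => LinearMap.proj i.castSucc) ∘ₗ S.subtype with hj
    set uu : (LinearMap.ker p) →ₗ[R] (Fin n → R) := j ∘ₗ (LinearMap.ker p).subtype with huu
    have hu : Function.Injective uu := by
      intro x y hxy
      apply Subtype.ext
      apply Subtype.ext
      funext i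
      refine Fin.lastCases ?_ (fun i => congrFun hxy i) i
      · have hx : ((x : S) : Fin (n+1) → R) (Fin.last n) = 0 := x.2
        have hy : ((y : S) : Fin (n+1) → R) (Fin.last n) = 0 := y.2
        rw [hx, hy]
    have hT : (LinearMap.range uu).FG := by
      rw [← Submodule.map_top]
      exact Submodule.FG.map uu Module.Finite.fg_top
    have hTfp : Module.FinitePresentation R (LinearMap.range uu) := IH _ hT
    haveI hkerfp : Module.FinitePresentation R (LinearMap.ker p) :=
      fp_of_equiv (M := ↥(LinearMap.range uu)) (N := ↥(LinearMap.ker p))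
        (LinearEquiv.ofInjective uu hu).symm hTfp
    haveI : Module.FinitePresentation R (LinearMap.ker p.rangeRestrict) := by
      rw [LinearMap.ker_rangeRestrict]; exact hkerfp
    exact Module.finitePresentation_of_ker p.rangeRestrict hsurj

lemma fg_submodule_fp (hcoh : ∀ I : Ideal R, I.FG → Module.FinitePresentation R I)
    {M : Type u} [AddCommGroup M] [Module R M]
    (hM : Module.FinitePresentation R M) (S : Submodule R M) (hS : S.FG) :
    Module.FinitePresentation R S := by
  obtain ⟨s, hspan, hker⟩ := hM
  set l := Finsupp.linearCombination R ((↑) : s → M) with hl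
  have hls : Function.Surjective l := by
    rw [← LinearMap.range_eq_top, Finsupp.range_linearCombination, Subtype.range_val, ← hspan]
  set T := Submodule.comap l S with hT
  have hkerT : LinearMap.ker l ≤ T := fun x hx => by
    simp only [T, Submodule.mem_comap, LinearMap.mem_ker.mp hx]
    exact S.zero_mem
  have hTfg : T.FG := by
    apply Submodule.fg_of_fg_map_of_fg_inf_ker l
    · rwa [Submodule.map_comap_eq, LinearMap.range_eq_top.mpr hls, top_inf_eq]
    · rwa [inf_of_le_right hkerT]
  -- transfer T to a submodule of Fin m → R
  haveI : Fintype (↥(s : Set M)) := FinsetCoe.fintype s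
  set e : ((↥(s : Set M)) →₀ R) ≃ₗ[R] (Fin (Fintype.card ↥(s : Set M)) → R) :=
    (Finsupp.linearEquivFunOnFinite R R _).trans
      (LinearEquiv.funCongrLeft R R (Fintype.equivFin ↥(s : Set M)).symm) with he
  have hT'fg : (Submodule.map (e : ((↥(s : Set M)) →₀ R) →ₗ[R] (Fin (Fintype.card ↥(s : Set M)) → R)) T).FG :=
    Submodule.FG.map _ hTfg
  have hT'fp := fg_submodule_pi_fp hcoh _ _ hT'fg
  haveI hTfp : Module.FinitePresentation R T :=
    fp_of_equiv (M := ↥(Submodule.map (e : ((↥(s : Set M)) →₀ R) →ₗ[R] (Fin (Fintype.card ↥(s : Set M)) → R)) T)) (N := ↥T)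
      (e.submoduleMap T).symm hT'fp
  -- now map T onto S
  set l' : T →ₗ[R] S := l.restrict (fun x hx => hx) with hl'
  have hl's : Function.Surjective l' := by
    rintro ⟨y, hy⟩
    obtain ⟨x, rfl⟩ := hls y
    exact ⟨⟨x, hy⟩, rfl⟩
  have hkerl' : (LinearMap.ker l').FG := by
    have : LinearMap.ker l' = Submodule.comap T.subtype (LinearMap.ker l) := by
      ext x
      simp [l', LinearMap.restrict_apply, Subtype.ext_iff]
    rw [this]
    haveI : Module.Finite R (LinearMap.ker l) := Module.Finite.iff_fg.mpr hker
    haveI : Module.Finite R (Submodule.comap T.subtype (LinearMap.ker l)) :=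
      Module.Finite.equiv (Submodule.comapSubtypeEquivOfLe hkerT).symm
    exact Module.Finite.iff_fg.mp this
  exact Module.finitePresentation_of_surjective (R := R) (M := T) (N := S) l' hl's hkerl'

lemma ker_fp (hcoh : ∀ I : Ideal R, I.FG → Module.FinitePresentation R I)
    {M N : Type u} [AddCommGroup M] [Module R M] [AddCommGroup N] [Module R N]
    (hM : Module.FinitePresentation R M) (hN : Module.FinitePresentation R N)
    (f : M →ₗ[R] N) : Module.FinitePresentation R (LinearMap.ker f) := by
  haveI := hM
  have hrfg : (LinearMap.range f).FG := by
    rw [← Submodule.map_top]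
    exact Submodule.FG.map f Module.Finite.fg_top
  haveI hrfp : Module.FinitePresentation R (LinearMap.range f) := fg_submodule_fp hcoh hN _ hrfg
  have hkfg : (LinearMap.ker f.rangeRestrict).FG :=
    Module.FinitePresentation.fg_ker _ (LinearMap.surjective_rangeRestrict f)
  rw [LinearMap.ker_rangeRestrict] at hkfg
  exact fg_submodule_fp hcoh hM _ hkfg

end Coherence

section FunctorLemmas

variable {Λ : Type u} [Ring Λ] (𝒳 : Set (RMod Λ))

lemma resY_map_app {M N : RMod Λ} (φ : M ⟶ N) (X : (XCat 𝒳)ᵒᵖ) (f : X.unop.obj ⟶ M) :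
    ((resY 𝒳).map φ).app X f = f ≫ φ := rfl

lemma funcat_exact_iff (S' : ShortComplex (FunCat 𝒳)) :
    S'.Exact ↔ ∀ X : (XCat 𝒳)ᵒᵖ,
      (S'.map ((evaluation (XCat 𝒳)ᵒᵖ AddCommGrpCat.{u}).obj X)).Exact := by
  constructor
  · intro h X
    exact h.map _
  · intro h
    rw [S'.exact_iff_isZero_homology, Functor.isZero_iff]
    intro X
    exact (S'.mapHomologyIso ((evaluation (XCat 𝒳)ᵒᵖ AddCommGrpCat.{u}).obj X)).isZero_iff.mp
      ((S'.map _).exact_iff_isZero_homology.mp (h X))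

lemma funcat_exact_of_elem {S' : ShortComplex (FunCat 𝒳)}
    (h : ∀ (X : (XCat 𝒳)ᵒᵖ) (y : S'.X₂.obj X), S'.g.app X y = 0 →
      ∃ x : S'.X₁.obj X, S'.f.app X x = y) :
    S'.Exact := by
  rw [funcat_exact_iff]
  intro X
  rw [ShortComplex.ab_exact_iff]
  exact h X

lemma funcat_exact_elem {S' : ShortComplex (FunCat 𝒳)} (h : S'.Exact)
    (X : (XCat 𝒳)ᵒᵖ) (y : S'.X₂.obj X) (hy : S'.g.app X y = 0) :
    ∃ x : S'.X₁.obj X, S'.f.app X x = y := by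
  have h2 := (funcat_exact_iff 𝒳 S').mp h X
  rw [ShortComplex.ab_exact_iff] at h2
  exact h2 y hy

lemma funcat_epi_of_surjective {F G : FunCat 𝒳} (η : F ⟶ G)
    (h : ∀ X, Function.Surjective (η.app X)) : Epi η := by
  haveI : ∀ X, Epi (η.app X) := fun X => (AddCommGrpCat.epi_iff_surjective _).mpr (h X)
  exact NatTrans.epi_of_epi_app η

lemma funcat_app_surjective {F G : FunCat 𝒳} (η : F ⟶ G) [Epi η] (X : (XCat 𝒳)ᵒᵖ) :
    Function.Surjective (η.app X) := by
  rw [← AddCommGrpCat.epi_iff_surjective]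
  infer_instance

lemma funcat_app_injective {F G : FunCat 𝒳} (η : F ⟶ G) [Mono η] (X : (XCat 𝒳)ᵒᵖ) :
    Function.Injective (η.app X) := by
  rw [← AddCommGrpCat.mono_iff_injective]
  infer_instance

lemma finPres_of_exact {X₁ X₀ : RMod Λ} (h1 : X₁ ∈ 𝒳) (h0 : X₀ ∈ 𝒳) (d : X₁ ⟶ X₀)
    {F : FunCat 𝒳} (p : (resY 𝒳).obj X₀ ⟶ F) (w : (resY 𝒳).map d ≫ p = 0) (hp : Epi p)
    (hex : (ShortComplex.mk ((resY 𝒳).map d) p w).Exact) : FinPres 𝒳 F := by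
  refine ⟨X₁, X₀, h1, h0, d, ⟨?_⟩⟩
  haveI : Epi (ShortComplex.mk ((resY 𝒳).map d) p w).g := hp
  have hc : IsColimit (CokernelCofork.ofπ p w) := hex.gIsCokernel
  exact IsColimit.coconePointUniqueUpToIso hc (colimit.isColimit (parallelPair ((resY 𝒳).map d) 0))

lemma isZero_eval_kernel {F G : FunCat 𝒳} (g : F ⟶ G) (X : (XCat 𝒳)ᵒᵖ)
    (h : IsIso (g.app X)) : IsZero ((kernel g).obj X) := by
  haveI := h
  exact IsZero.of_iso (isZero_zero _)
    ((PreservesKernel.iso ((evaluation (XCat 𝒳)ᵒᵖ AddCommGrpCat.{u}).obj X) g) ≪≫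
      kernel.ofMono (g.app X))

lemma isZero_eval_cokernel {F G : FunCat 𝒳} (g : F ⟶ G) (X : (XCat 𝒳)ᵒᵖ)
    (h : IsIso (g.app X)) : IsZero ((cokernel g).obj X) := by
  haveI := h
  exact IsZero.of_iso (isZero_zero _)
    ((PreservesCokernel.iso ((evaluation (XCat 𝒳)ᵒᵖ AddCommGrpCat.{u}).obj X) g) ≪≫
      cokernel.ofEpi (g.app X))

end FunctorLemmas

/-- For a right coherent ring `A` and contravariantly finite `X ⊇ prj-A`, for
every finitely presented functor `F` (presented by `d' : X₁ ⟶ X₀`) there is an exact sequence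
`0 → F₀ → F → Hom(-, θ(F))|_X → F₁ → 0` with `F₀, F₁ ∈ mod₀-X`, where `θ(F) = coker d'` and
the middle map is the unit of the adjunction `(θ, θ_ρ)`. -/
theorem statement1 (A : Type u) [Ring A] (hA : RightCoherent A)
    (𝒳 : Set (RMod A))
    (h𝒳 : GoodSub (fun M : RMod A => Module.FinitePresentation Aᵐᵒᵖ M) 𝒳)
    (F : FunCat 𝒳) (X₁ X₀ : RMod A) (hX₁ : X₁ ∈ 𝒳) (hX₀ : X₀ ∈ 𝒳)
    (d' : X₁ ⟶ X₀) (e : F ≅ cokernel ((resY 𝒳).map d')) :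
    ∃ (F₀ F₁ : FunCat 𝒳) (a : F₀ ⟶ F) (b : (resY 𝒳).obj (cokernel d') ⟶ F₁)
      (w₁ : a ≫ (e.hom ≫ unitMap 𝒳 d') = 0)
      (w₂ : (e.hom ≫ unitMap 𝒳 d') ≫ b = 0),
      FinPres 𝒳 F₀ ∧ Vanish0 𝒳 F₀ ∧ FinPres 𝒳 F₁ ∧ Vanish0 𝒳 F₁ ∧
      Mono a ∧ Epi b ∧
      (ShortComplex.mk a (e.hom ≫ unitMap 𝒳 d') w₁).Exact ∧
      (ShortComplex.mk (e.hom ≫ unitMap 𝒳 d') b w₂).Exact := by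
  have hcoh := hA
  haveI hX₁p : Module.FinitePresentation Aᵐᵒᵖ X₁ := h𝒳.mem_mod X₁ hX₁
  haveI hX₀p : Module.FinitePresentation Aᵐᵒᵖ X₀ := h𝒳.mem_mod X₀ hX₀
  let M : RMod A := cokernel d'
  let π : X₀ ⟶ M := cokernel.π d'
  have hπs : Function.Surjective π := by
    rw [← ModuleCat.epi_iff_surjective]
    exact inferInstanceAs (Epi (cokernel.π d'))
  have hdπ : ∀ y : X₁, π (d' y) = 0 := by
    intro y
    have h0 := cokernel.condition d'
    calc π (d' y) = (d' ≫ cokernel.π d') y := rfl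
    _ = (0 : X₁ ⟶ M) y := by rw [h0]
    _ = 0 := rfl
  have hexd : ∀ x : X₀, π x = 0 → ∃ y : X₁, d' y = x := by
    have hc := ShortComplex.exact_cokernel d'
    rw [ShortComplex.moduleCat_exact_iff] at hc
    exact hc
  have hkerπ : LinearMap.ker π.hom = LinearMap.range d'.hom := by
    ext x
    constructor
    · intro hx
      exact hexd x hx
    · rintro ⟨y, rfl⟩
      exact hdπ y
  have hrfg : (LinearMap.range d'.hom).FG := by
    rw [← Submodule.map_top]
    exact Submodule.FG.map _ Module.Finite.fg_top
  haveI hMp : Module.FinitePresentation Aᵐᵒᵖ M :=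
    Module.finitePresentation_of_surjective π.hom hπs
      (by rw [hkerπ]; exact hrfg)
  let γ := unitMap 𝒳 d'
  have hπcγ : cokernel.π ((resY 𝒳).map d') ≫ γ = (resY 𝒳).map π := cokernel.π_desc _ _ _
  have hπc_surj : ∀ (X : (XCat 𝒳)ᵒᵖ) (x : (cokernel ((resY 𝒳).map d')).obj X),
      ∃ q : X.unop.obj ⟶ X₀, (cokernel.π ((resY 𝒳).map d')).app X q = x := by
    intro X x
    obtain ⟨q, hq⟩ := funcat_app_surjective 𝒳 (cokernel.π ((resY 𝒳).map d')) X x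
    exact ⟨q, hq⟩
  have hγ_elem : ∀ (X : (XCat 𝒳)ᵒᵖ) (q : X.unop.obj ⟶ X₀),
      γ.app X ((cokernel.π ((resY 𝒳).map d')).app X q) = q ≫ π := by
    intro X q
    show _ = ((resY 𝒳).map π).app X q
    calc γ.app X ((cokernel.π ((resY 𝒳).map d')).app X q)
        = (cokernel.π ((resY 𝒳).map d') ≫ γ).app X q := rfl
    _ = ((resY 𝒳).map π).app X q := by rw [hπcγ]
  have hd'_zero : ∀ (X : (XCat 𝒳)ᵒᵖ) (r : X.unop.obj ⟶ X₁),
      (cokernel.π ((resY 𝒳).map d')).app X (r ≫ d') = 0 := by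
    intro X r
    have h0 := cokernel.condition ((resY 𝒳).map d')
    calc (cokernel.π ((resY 𝒳).map d')).app X (r ≫ d')
        = ((resY 𝒳).map d' ≫ cokernel.π ((resY 𝒳).map d')).app X r := rfl
    _ = (0 : (resY 𝒳).obj X₁ ⟶ cokernel ((resY 𝒳).map d')).app X r := by rw [h0]
    _ = 0 := rfl
  let g' : F ⟶ (resY 𝒳).obj M := e.hom ≫ γ
  have hg'def : g' = e.hom ≫ γ := rfl
  have hγcoker : γ ≫ cokernel.π g' = 0 := by
    have h1 : e.inv ≫ g' = γ := by rw [hg'def, Iso.inv_hom_id_assoc]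
    calc γ ≫ cokernel.π g' = e.inv ≫ g' ≫ cokernel.π g' := by
          rw [← Category.assoc, h1]
    _ = 0 := by rw [cokernel.condition, comp_zero]
  have hπcoker : (resY 𝒳).map π ≫ cokernel.π g' = 0 := by
    rw [← hπcγ, Category.assoc, hγcoker, comp_zero]
  -- the inclusion of the range of d'
  let Nd : RMod A := ModuleCat.of Aᵐᵒᵖ ↥(LinearMap.range d'.hom)
  let ιd : Nd ⟶ X₀ := ModuleCat.ofHom (LinearMap.range d'.hom).subtype
  let dtop : X₁ ⟶ Nd := ModuleCat.ofHom d'.hom.rangeRestrict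
  have hdtop_ι : dtop ≫ ιd = d' := ModuleCat.hom_ext (LinearMap.ext fun v => rfl)
  have hdtop_epi : Epi dtop := by
    rw [ModuleCat.epi_iff_surjective]
    exact LinearMap.surjective_rangeRestrict _
  have hexc : ∀ (X : (XCat 𝒳)ᵒᵖ) (y : ((resY 𝒳).obj X₀).obj X),
      (cokernel.π ((resY 𝒳).map d')).app X y = 0 →
      ∃ r : X.unop.obj ⟶ X₁, ((resY 𝒳).map d').app X r = y := by
    intro X y hy
    obtain ⟨r, hr⟩ := funcat_exact_elem 𝒳
      (ShortComplex.exact_cokernel ((resY 𝒳).map d')) X y hy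
    exact ⟨r, hr⟩
  -- γ (hence g') is an isomorphism at each projective object of 𝒳
  have hγ_iso : ∀ P : XCat 𝒳, Projective P.obj → IsIso (g'.app (op P)) := by
    intro P hP
    haveI := hP
    haveI : Projective ((ObjectProperty.ι (fun M => M ∈ 𝒳)).op.obj (op P)).unop := hP
    haveI := hdtop_epi
    have hmono : Mono (γ.app (op P)) := by
      rw [AddCommGrpCat.mono_iff_injective]
      rw [injective_iff_map_eq_zero]
      intro x hx
      obtain ⟨q, rfl⟩ := hπc_surj (op P) x
      rw [hγ_elem] at hx
      have hmem : ∀ v : P.obj, q.hom v ∈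
          LinearMap.range d'.hom := by
        intro v
        apply hexd
        calc π (q v) = (q ≫ π) v := rfl
        _ = (0 : P.obj ⟶ M) v := by rw [hx]; rfl
        _ = 0 := rfl
      let q₀ : P.obj ⟶ Nd :=
        ModuleCat.ofHom <| LinearMap.codRestrict (LinearMap.range d'.hom) q.hom hmem
      have hq₀ι : q₀ ≫ ιd = q := ModuleCat.hom_ext (LinearMap.ext fun v => rfl)
      let r : P.obj ⟶ X₁ := Projective.factorThru q₀ dtop
      have hrq : r ≫ d' = q := by
        have h1 : r ≫ dtop = q₀ := Projective.factorThru_comp _ _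
        calc r ≫ d' = r ≫ dtop ≫ ιd := by rw [hdtop_ι]
        _ = (r ≫ dtop) ≫ ιd := by rw [Category.assoc]
        _ = q₀ ≫ ιd := by rw [h1]
        _ = q := hq₀ι
      rw [← hrq]
      exact hd'_zero (op P) r
    have hepi : Epi (γ.app (op P)) := by
      rw [AddCommGrpCat.epi_iff_surjective]
      intro m
      haveI : Epi π := inferInstanceAs (Epi (cokernel.π d'))
      let m' : P.obj ⟶ M := m
      refine ⟨(cokernel.π ((resY 𝒳).map d')).app (op P)
        (Projective.factorThru m' π), ?_⟩
      rw [hγ_elem]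
      exact Projective.factorThru_comp _ _
    haveI := hmono
    haveI := hepi
    haveI : IsIso (γ.app (op P)) := isIso_of_mono_of_epi _
    rw [hg'def, NatTrans.comp_app]
    infer_instance
  refine ⟨kernel g', cokernel g',
    kernel.ι _, cokernel.π _, kernel.condition _, cokernel.condition _,
    ?_, ?_, ?_, ?_, inferInstance, inferInstance,
    ShortComplex.exact_kernel _, ShortComplex.exact_cokernel _⟩
  · -- FinPres of the kernel
    have hNdp : Module.FinitePresentation Aᵐᵒᵖ Nd := fg_submodule_fp hcoh hX₀p _ hrfg
    obtain ⟨Y₀', hY₀', ε', hε'⟩ := h𝒳.approx Nd hNdp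
    have hY₀'p : Module.FinitePresentation Aᵐᵒᵖ Y₀' := h𝒳.mem_mod _ hY₀'
    have hK'p : Module.FinitePresentation Aᵐᵒᵖ
        ↥(LinearMap.ker ε'.hom) := ker_fp hcoh hY₀'p hNdp ε'.hom
    let K'mod : RMod A := ModuleCat.of Aᵐᵒᵖ ↥(LinearMap.ker ε'.hom)
    obtain ⟨Y₁', hY₁', a'', ha''⟩ := h𝒳.approx K'mod hK'p
    let ιK' : K'mod ⟶ Y₀' := ModuleCat.ofHom (LinearMap.ker ε'.hom).subtype
    let b' : Y₁' ⟶ Y₀' := a'' ≫ ιK'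
    have hb'ε' : b' ≫ ε' = 0 := ModuleCat.hom_ext (LinearMap.ext fun v => (a'' v).2)
    obtain ⟨h', hh'⟩ := hε' X₁ hX₁ dtop
    let W' : RMod A := ModuleCat.of Aᵐᵒᵖ (X₁ × Y₁')
    have hW' : W' ∈ 𝒳 := h𝒳.sum_mem _ _ hX₁ hY₁'
    let d₃ : W' ⟶ Y₀' :=
      ModuleCat.ofHom <| LinearMap.coprod h'.hom b'.hom
    have hιπ : ιd ≫ π = 0 := by
      apply ModuleCat.hom_ext
      apply LinearMap.ext
      rintro ⟨w, y, hy⟩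
      show π w = 0
      rw [← hy]
      exact hdπ y
    let t : (resY 𝒳).obj Y₀' ⟶ F :=
      (resY 𝒳).map (ε' ≫ ιd) ≫ cokernel.π ((resY 𝒳).map d') ≫ e.inv
    have htg : t ≫ g' = 0 := by
      show ((resY 𝒳).map (ε' ≫ ιd) ≫ cokernel.π ((resY 𝒳).map d') ≫ e.inv) ≫
        (e.hom ≫ γ) = 0
      rw [Category.assoc, Category.assoc, Iso.inv_hom_id_assoc, hπcγ]
      have h1 : (ε' ≫ ιd) ≫ π = 0 := by rw [Category.assoc, hιπ, comp_zero]
      exact resY_comp_zero 𝒳 _ _ h1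
    let p₀ : (resY 𝒳).obj Y₀' ⟶ kernel g' := kernel.lift g' t htg
    have hp₀ι : p₀ ≫ kernel.ι g' = t := kernel.lift_ι g' t htg
    have hd₃ε' : d₃ ≫ ε' = ModuleCat.ofHom (LinearMap.fst Aᵐᵒᵖ X₁ Y₁') ≫ dtop := by
      apply ModuleCat.hom_ext
      apply LinearMap.ext
      rintro ⟨x, y⟩
      show ε'.hom (h'.hom x + b'.hom y)
        = dtop.hom x
      rw [map_add]
      have e1 : ε'.hom (h'.hom x)
          = dtop.hom x := by
        calc ε'.hom (h'.hom x) = (h' ≫ ε') x := rfl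
        _ = dtop.hom x := by rw [hh']
      have e2 : ε'.hom (b'.hom y) = 0 := by
        calc ε'.hom (b'.hom y) = (b' ≫ ε') y := rfl
        _ = (0 : Y₁' ⟶ Nd) y := by rw [hb'ε']
        _ = 0 := rfl
      rw [e1, e2, add_zero]
    have hw0 : (resY 𝒳).map d₃ ≫ p₀ = 0 := by
      rw [← cancel_mono (kernel.ι g'), Category.assoc, hp₀ι, zero_comp]
      show (resY 𝒳).map d₃ ≫
        (resY 𝒳).map (ε' ≫ ιd) ≫ cokernel.π ((resY 𝒳).map d') ≫ e.inv = 0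
      have h4 : d₃ ≫ ε' ≫ ιd = ModuleCat.ofHom (LinearMap.fst Aᵐᵒᵖ X₁ Y₁') ≫ d' := by
        rw [← Category.assoc, hd₃ε', Category.assoc, hdtop_ι]
      rw [← Category.assoc, ← Functor.map_comp, h4, Functor.map_comp, Category.assoc,
        cokernel.condition_assoc, zero_comp, comp_zero]
    have hp₀epi : Epi p₀ := by
      apply funcat_epi_of_surjective
      intro X v
      let x := (kernel.ι g').app X v
      have hgx : g'.app X x = 0 := by
        calc g'.app X ((kernel.ι g').app X v) = (kernel.ι g' ≫ g').app X v := rfl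
        _ = (0 : kernel g' ⟶ (resY 𝒳).obj M).app X v := by rw [kernel.condition]
        _ = 0 := rfl
      obtain ⟨q, hq⟩ := hπc_surj X (e.hom.app X x)
      have hqπ : q ≫ π = 0 := by
        rw [← hγ_elem X q, hq]
        exact hgx
      have hmemq : ∀ w : X.unop.obj, q.hom w ∈
          LinearMap.range d'.hom := by
        intro w
        apply hexd
        calc π (q w) = (q ≫ π) w := rfl
        _ = (0 : X.unop.obj ⟶ M) w := by rw [hqπ]
        _ = 0 := rfl
      let q' : X.unop.obj ⟶ Nd :=
        ModuleCat.ofHom <| LinearMap.codRestrict (LinearMap.range d'.hom) q.hom hmemq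
      have hq'ι : q' ≫ ιd = q := ModuleCat.hom_ext (LinearMap.ext fun w => rfl)
      obtain ⟨q'', hq''⟩ := hε' X.unop.obj X.unop.property q'
      refine ⟨q'', ?_⟩
      apply funcat_app_injective 𝒳 (kernel.ι g') X
      have hstep : (kernel.ι g').app X (p₀.app X q'') = t.app X q'' := by
        calc (kernel.ι g').app X (p₀.app X q'') = (p₀ ≫ kernel.ι g').app X q'' := rfl
        _ = t.app X q'' := by rw [hp₀ι]
      rw [hstep]
      have h5 : q'' ≫ (ε' ≫ ιd) = q := by rw [← Category.assoc, hq'', hq'ι]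
      calc t.app X q''
          = e.inv.app X ((cokernel.π ((resY 𝒳).map d')).app X (q'' ≫ (ε' ≫ ιd))) := rfl
      _ = e.inv.app X ((cokernel.π ((resY 𝒳).map d')).app X q) := by rw [h5]
      _ = e.inv.app X (e.hom.app X x) := by rw [hq]
      _ = (e.hom ≫ e.inv).app X x := rfl
      _ = (kernel.ι g').app X v := by rw [Iso.hom_inv_id]; rfl
    have hexact0 : (ShortComplex.mk ((resY 𝒳).map d₃) p₀ hw0).Exact := by
      apply funcat_exact_of_elem
      intro X y hy
      let f : X.unop.obj ⟶ Y₀' := y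
      have hty : t.app X f = 0 := by
        calc t.app X f = (p₀ ≫ kernel.ι g').app X f := by rw [hp₀ι]
        _ = (kernel.ι g').app X (p₀.app X f) := rfl
        _ = (kernel.ι g').app X 0 := by rw [show p₀.app X f = 0 from hy]
        _ = 0 := map_zero _
      have hπc0 : (cokernel.π ((resY 𝒳).map d')).app X (f ≫ (ε' ≫ ιd)) = 0 := by
        apply funcat_app_injective 𝒳 e.inv X
        rw [map_zero]
        exact hty
      obtain ⟨r, hr⟩ := hexc X (f ≫ (ε' ≫ ιd)) hπc0
      have hrd : r ≫ d' = f ≫ (ε' ≫ ιd) := hr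
      have hιmono : Mono ιd := by
        rw [ModuleCat.mono_iff_injective]
        exact Subtype.val_injective
      have hfε' : f ≫ ε' = r ≫ dtop := by
        rw [← cancel_mono ιd, Category.assoc, Category.assoc, hdtop_ι, hrd]
      have hsub : (f - r ≫ h') ≫ ε' = 0 := by
        rw [Preadditive.sub_comp, Category.assoc, hh', hfε', sub_self]
      have hmem3 : ∀ w : X.unop.obj, ((f - r ≫ h' : X.unop.obj ⟶ Y₀')) w ∈
          LinearMap.ker ε'.hom := by
        intro w
        show ε'.hom ((f - r ≫ h' : X.unop.obj ⟶ Y₀') w) = 0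
        calc ε'.hom ((f - r ≫ h' : X.unop.obj ⟶ Y₀') w)
            = ((f - r ≫ h') ≫ ε') w := rfl
        _ = (0 : X.unop.obj ⟶ Nd) w := by rw [hsub]
        _ = 0 := rfl
      let k2 : X.unop.obj ⟶ K'mod :=
        ModuleCat.ofHom <| LinearMap.codRestrict (LinearMap.ker ε'.hom)
          (f - r ≫ h').hom hmem3
      have hk2ι : k2 ≫ ιK' = f - r ≫ h' := ModuleCat.hom_ext (LinearMap.ext fun w => rfl)
      obtain ⟨k3, hk3⟩ := ha'' X.unop.obj X.unop.property k2
      refine ⟨ModuleCat.ofHom <| LinearMap.prod r.hom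
        k3.hom, ?_⟩
      have hk3b : k3 ≫ b' = f - r ≫ h' := by
        calc k3 ≫ b' = (k3 ≫ a'') ≫ ιK' := by rw [Category.assoc]
        _ = k2 ≫ ιK' := by rw [hk3]
        _ = f - r ≫ h' := hk2ι
      have hfinal : ModuleCat.ofHom (LinearMap.prod r.hom
          k3.hom) ≫ d₃ = f := by
        apply ModuleCat.hom_ext
        apply LinearMap.ext
        intro w
        show h'.hom (r w) + b'.hom (k3 w) = f w
        have e3 : b'.hom (k3 w) = f w - h'.hom (r w) := by
          calc b'.hom (k3 w) = (k3 ≫ b') w := rfl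
          _ = (f - r ≫ h') w := by rw [hk3b]
          _ = f w - h'.hom (r w) := rfl
        rw [e3, add_sub_cancel]
      exact hfinal
    exact finPres_of_exact 𝒳 hW' hY₀' d₃ p₀ hw0 hp₀epi hexact0
  · intro P hP
    exact isZero_eval_kernel 𝒳 g' (op P) (hγ_iso P hP)
  · -- FinPres of the cokernel
    obtain ⟨Y₀, hY₀, ε, hε⟩ := h𝒳.approx M hMp
    have hY₀p : Module.FinitePresentation Aᵐᵒᵖ Y₀ := h𝒳.mem_mod _ hY₀
    have hKp : Module.FinitePresentation Aᵐᵒᵖ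
        ↥(LinearMap.ker ε.hom) := ker_fp hcoh hY₀p hMp ε.hom
    let Kmod : RMod A := ModuleCat.of Aᵐᵒᵖ ↥(LinearMap.ker ε.hom)
    obtain ⟨Y₁, hY₁, a', ha'⟩ := h𝒳.approx Kmod hKp
    let ιK : Kmod ⟶ Y₀ := ModuleCat.ofHom (LinearMap.ker ε.hom).subtype
    let b : Y₁ ⟶ Y₀ := a' ≫ ιK
    have hbε : b ≫ ε = 0 := ModuleCat.hom_ext (LinearMap.ext fun v => (a' v).2)
    obtain ⟨h, hh⟩ := hε X₀ hX₀ π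
    let W : RMod A := ModuleCat.of Aᵐᵒᵖ (X₀ × Y₁)
    have hW : W ∈ 𝒳 := h𝒳.sum_mem _ _ hX₀ hY₁
    let d'' : W ⟶ Y₀ :=
      ModuleCat.ofHom <| LinearMap.coprod h.hom b.hom
    let p₁ : (resY 𝒳).obj Y₀ ⟶ cokernel g' := (resY 𝒳).map ε ≫ cokernel.π g'
    have hd''ε : d'' ≫ ε = ModuleCat.ofHom (LinearMap.fst Aᵐᵒᵖ X₀ Y₁) ≫ π := by
      apply ModuleCat.hom_ext
      apply LinearMap.ext
      rintro ⟨x, y⟩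
      show ε.hom (h.hom x + b.hom y)
        = π.hom x
      rw [map_add]
      have e1 : ε.hom (h.hom x) = π.hom x := by
        calc ε.hom (h.hom x) = (h ≫ ε) x := rfl
        _ = π.hom x := by rw [hh]
      have e2 : ε.hom (b.hom y) = 0 := by
        calc ε.hom (b.hom y) = (b ≫ ε) y := rfl
        _ = (0 : Y₁ ⟶ M) y := by rw [hbε]
        _ = 0 := rfl
      rw [e1, e2, add_zero]
    have hw1 : (resY 𝒳).map d'' ≫ p₁ = 0 := by
      show (resY 𝒳).map d'' ≫ (resY 𝒳).map ε ≫ cokernel.π g' = 0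
      rw [← Category.assoc, ← Functor.map_comp, hd''ε, Functor.map_comp, Category.assoc,
        hπcoker, comp_zero]
    have hεepi : Epi ((resY 𝒳).map ε) := by
      apply funcat_epi_of_surjective
      intro X fx
      let fm : X.unop.obj ⟶ M := fx
      obtain ⟨f', hf'⟩ := hε X.unop.obj X.unop.property fm
      exact ⟨f', hf'⟩
    have hp₁epi : Epi p₁ := by
      haveI := hεepi
      exact epi_comp _ _
    have hexact1 : (ShortComplex.mk ((resY 𝒳).map d'') p₁ hw1).Exact := by
      apply funcat_exact_of_elem
      intro X y hy
      let f : X.unop.obj ⟶ Y₀ := y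
      have hy' : (cokernel.π g').app X (((resY 𝒳).map ε).app X f) = 0 := hy
      obtain ⟨u, hu⟩ := funcat_exact_elem 𝒳 (ShortComplex.exact_cokernel g') X _ hy'
      obtain ⟨q, hq⟩ := hπc_surj X (e.hom.app X u)
      have hgu : g'.app X u = q ≫ π := by
        rw [← hγ_elem X q, hq]
        rfl
      have hfε : f ≫ ε = q ≫ π := by
        rw [← resY_map_app 𝒳 ε X f, ← hu]
        exact hgu
      have hsub : (f - q ≫ h) ≫ ε = 0 := by
        rw [Preadditive.sub_comp, Category.assoc, hh, hfε, sub_self]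
      have hmem2 : ∀ v : X.unop.obj, ((f - q ≫ h : X.unop.obj ⟶ Y₀)) v ∈
          LinearMap.ker ε.hom := by
        intro v
        show ε.hom ((f - q ≫ h : X.unop.obj ⟶ Y₀) v) = 0
        calc ε.hom ((f - q ≫ h : X.unop.obj ⟶ Y₀) v)
            = ((f - q ≫ h) ≫ ε) v := rfl
        _ = (0 : X.unop.obj ⟶ M) v := by rw [hsub]
        _ = 0 := rfl
      let k : X.unop.obj ⟶ Kmod :=
        ModuleCat.ofHom <| LinearMap.codRestrict (LinearMap.ker ε.hom)
          (f - q ≫ h).hom hmem2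
      have hkι : k ≫ ιK = f - q ≫ h := ModuleCat.hom_ext (LinearMap.ext fun v => rfl)
      obtain ⟨k', hk'⟩ := ha' X.unop.obj X.unop.property k
      refine ⟨ModuleCat.ofHom <| LinearMap.prod q.hom
        k'.hom, ?_⟩
      have hk'b : k' ≫ b = f - q ≫ h := by
        calc k' ≫ b = (k' ≫ a') ≫ ιK := by rw [Category.assoc]
        _ = k ≫ ιK := by rw [hk']
        _ = f - q ≫ h := hkι
      have hfinal : ModuleCat.ofHom (LinearMap.prod q.hom
          k'.hom) ≫ d'' = f := by
        apply ModuleCat.hom_ext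
        apply LinearMap.ext
        intro v
        show h.hom (q v) + b.hom (k' v) = f v
        have e3 : b.hom (k' v) = f v - h.hom (q v) := by
          calc b.hom (k' v) = (k' ≫ b) v := rfl
          _ = (f - q ≫ h) v := by rw [hk'b]
          _ = f v - h.hom (q v) := rfl
        rw [e3, add_sub_cancel]
      exact hfinal
    exact finPres_of_exact 𝒳 hW hY₀ d'' p₁ hw1 hp₁epi hexact1
  · intro P hP
    exact isZero_eval_cokernel 𝒳 g' (op P) (hγ_iso P hP)

end RelAus
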